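/- Let N ≥ 5 and h ∈ (0,1). For α ≥ 1 there is a constant C = C(N,α) such that for all integers k ≥ 2, Σ_{j=1}^{⌊(k-1)/2⌋} ((1-h²)sin²(jπ/k) + h²)^{-α/2} ≤ C·(k/h^{α-1} + k) when α > 1 and h·k ≥ 1. -/

import Mathlib

open Real Finset

-- Key MVT step: (α-1) (x+1)^{-α} ≤ x^{1-α} - (x+1)^{1-α} for x ≥ 1.
lemma key_step (α : ℝ) (hα : 1 < α) (x : ℝ) (hx : 1 ≤ x) :
    (α - 1) * (x + 1) ^ (-α) ≤ x ^ (1 - α) - (x + 1) ^ (1 - α) := by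
  have hx0 : (0:ℝ) < x := lt_of_lt_of_le one_pos hx
  obtain ⟨c, hc, hceq⟩ := exists_hasDerivAt_eq_slope (fun y => y ^ (1 - α))
      (fun y => (1 - α) * y ^ (1 - α - 1)) (by linarith : x < x + 1)
      (by
        apply ContinuousOn.rpow_const continuousOn_id
        intro y hy
        exact Or.inl (by simp only [id]; nlinarith [hy.1]))
      (fun y hy => Real.hasDerivAt_rpow_const (Or.inl (by nlinarith [hy.1])))
  have hc1 : 0 < c := by linarith [hc.1]
  have hc2 : c ≤ x + 1 := le_of_lt hc.2
  have h1 : (1 - α) * c ^ (1 - α - 1) = (x + 1) ^ (1 - α) - x ^ (1 - α) := by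
    rw [hceq]; ring_nf
  have h2 : (x + 1) ^ (-α) ≤ c ^ (-α) :=
    Real.rpow_le_rpow_of_nonpos hc1 hc2 (by linarith)
  have hae : (1 - α - 1 : ℝ) = -α := by ring
  rw [hae] at h1
  nlinarith [h2, mul_le_mul_of_nonneg_left h2 (by linarith : (0:ℝ) ≤ α - 1)]

-- telescoping tail bound
lemma tail_bound (α : ℝ) (hα : 1 < α) (m : ℕ) (hm : 1 ≤ m) :
    ∀ M : ℕ, ∑ j ∈ Finset.Icc (m+1) M, ((j:ℝ)) ^ (-α) ≤ (m:ℝ) ^ (1 - α) / (α - 1) := by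
  have hα1 : (0:ℝ) < α - 1 := by linarith
  have main : ∀ M : ℕ, m ≤ M →
      ∑ j ∈ Finset.Icc (m+1) M, ((j:ℝ)) ^ (-α)
        ≤ ((m:ℝ) ^ (1 - α) - (M:ℝ) ^ (1 - α)) / (α - 1) := by
    intro M hM
    induction M with
    | zero => omega
    | succ M ih =>
      rcases Nat.lt_or_ge m (M+1) with hlt | hge
      · have hmM : m ≤ M := by omega
        rw [Finset.sum_Icc_succ_top (by omega : m + 1 ≤ M + 1)]
        have hM1 : (1:ℝ) ≤ (M:ℝ) := by exact_mod_cast Nat.one_le_iff_ne_zero.mpr (by omega)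
        have hkey := key_step α hα (M:ℝ) hM1
        have hcast : ((M+1:ℕ):ℝ) = (M:ℝ) + 1 := by push_cast; ring
        rw [hcast]
        have hstep : ((M:ℝ)+1) ^ (-α) ≤ ((M:ℝ) ^ (1-α) - ((M:ℝ)+1) ^ (1-α)) / (α-1) := by
          rw [le_div_iff₀ hα1]; linarith
        calc ∑ j ∈ Finset.Icc (m+1) M, ((j:ℝ)) ^ (-α) + ((M:ℝ)+1) ^ (-α)
            ≤ ((m:ℝ) ^ (1-α) - (M:ℝ) ^ (1-α)) / (α-1)
              + ((M:ℝ) ^ (1-α) - ((M:ℝ)+1) ^ (1-α)) / (α-1) := add_le_add (ih hmM) hstep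
          _ = ((m:ℝ) ^ (1-α) - ((M:ℝ)+1) ^ (1-α)) / (α-1) := by ring
      · have : m = M + 1 := by omega
        subst this
        simp
  intro M
  rcases Nat.lt_or_ge M (m+1) with h | h
  · rw [Finset.Icc_eq_empty (by omega)]
    simp only [Finset.sum_empty]
    positivity
  · refine (main M (by omega)).trans ?_
    have hM0 : (0:ℝ) < (M:ℝ) := by exact_mod_cast Nat.pos_of_ne_zero (by omega)
    have : (0:ℝ) ≤ (M:ℝ) ^ (1 - α) := (Real.rpow_pos_of_pos hM0 _).le
    apply div_le_div_of_nonneg_right ?_ (by linarith)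
    linarith

set_option maxHeartbeats 1000000 in
theorem stmt_13 (N : ℕ) (hN : 5 ≤ N) (α : ℝ) (hα : 1 < α) :
    ∃ C > 0, ∀ k : ℕ, 2 ≤ k → ∀ h : ℝ, h ∈ Set.Ioo (0:ℝ) 1 → 1 ≤ h * k →
      ∑ j ∈ Finset.Icc 1 ((k-1)/2),
          ((1-h^2) * Real.sin ((j:ℝ)*Real.pi/k)^2 + h^2) ^ (-α/2)
        ≤ C * ((k:ℝ) / h ^ (α-1) + (k:ℝ)) := by
  have hα1 : (0:ℝ) < α - 1 := by linarith
  refine ⟨2 + 1/(α-1), by positivity, ?_⟩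
  intro k hk h hh hhk
  obtain ⟨hh0, hh1⟩ := hh
  have hk0 : (0:ℝ) < (k:ℝ) := by exact_mod_cast (by omega : 0 < k)
  have hsq1 : h^2 < 1 := by nlinarith
  set M := (k-1)/2 with hM
  set m := Nat.ceil (h * k) with hmdef
  have hm1 : 1 ≤ m := Nat.one_le_ceil_iff.mpr (by nlinarith)
  have hmle : h * k ≤ (m:ℝ) := Nat.le_ceil _
  have hmlt : (m:ℝ) ≤ h * k + 1 := by
    have := Nat.ceil_lt_add_one (by positivity : (0:ℝ) ≤ h * k)
    linarith
  have hm2 : (m:ℝ) ≤ 2 * (h * k) := by linarith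
  have hsin : ∀ j ∈ Finset.Icc 1 M, 2*(j:ℝ)/k ≤ Real.sin ((j:ℝ)*Real.pi/k) := by
    intro j hj
    obtain ⟨hj1, hj2⟩ := Finset.mem_Icc.mp hj
    have hj1' : (1:ℝ) ≤ (j:ℝ) := by exact_mod_cast hj1
    have hjk : 2 * j ≤ k - 1 := by omega
    have hjk' : 2 * (j:ℝ) ≤ (k:ℝ) - 1 := by
      have h2 : ((2*j:ℕ):ℝ) ≤ ((k-1:ℕ):ℝ) := by exact_mod_cast hjk
      push_cast [Nat.cast_sub (by omega : 1 ≤ k)] at h2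
      linarith
    have hx0 : (0:ℝ) ≤ (j:ℝ)*Real.pi/k := by positivity
    have hx2 : (j:ℝ)*Real.pi/k ≤ Real.pi/2 := by
      rw [div_le_div_iff₀ hk0 two_pos]
      nlinarith [Real.pi_pos]
    calc 2*(j:ℝ)/k = 2/Real.pi * ((j:ℝ)*Real.pi/k) := by
          field_simp
      _ ≤ Real.sin ((j:ℝ)*Real.pi/k) := Real.mul_le_sin hx0 hx2
  have hterm1 : ∀ j ∈ Finset.Icc 1 M,
      ((1-h^2) * Real.sin ((j:ℝ)*Real.pi/k)^2 + h^2) ^ (-α/2) ≤ h ^ (-α) := by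
    intro j hj
    have h1 : h^2 ≤ (1-h^2) * Real.sin ((j:ℝ)*Real.pi/k)^2 + h^2 := by
      nlinarith [mul_nonneg (by linarith : (0:ℝ) ≤ 1 - h^2) (sq_nonneg (Real.sin ((j:ℝ)*Real.pi/k)))]
    have := Real.rpow_le_rpow_of_nonpos (by positivity) h1 (by linarith : -α/2 ≤ 0)
    refine this.trans_eq ?_
    rw [← Real.rpow_natCast h 2, ← Real.rpow_mul hh0.le,
      show ((2:ℕ):ℝ) * (-α/2) = -α by push_cast; ring]
  have hterm2 : ∀ j ∈ Finset.Icc 1 M,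
      ((1-h^2) * Real.sin ((j:ℝ)*Real.pi/k)^2 + h^2) ^ (-α/2) ≤ (k:ℝ)^α * (j:ℝ) ^ (-α) := by
    intro j hj
    obtain ⟨hj1, hj2⟩ := Finset.mem_Icc.mp hj
    have hj1' : (1:ℝ) ≤ (j:ℝ) := by exact_mod_cast hj1
    have hs := hsin j hj
    have hjk0 : (0:ℝ) < (j:ℝ)/k := by positivity
    have hsle : (j:ℝ)/k ≤ Real.sin ((j:ℝ)*Real.pi/k) := by
      refine le_trans ?_ hs
      rw [div_le_div_iff₀ hk0 hk0]
      nlinarith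
    have hsq : ((j:ℝ)/k)^2 ≤ Real.sin ((j:ℝ)*Real.pi/k)^2 :=
      pow_le_pow_left₀ hjk0.le hsle 2
    have h1 : ((j:ℝ)/k)^2 ≤ (1-h^2) * Real.sin ((j:ℝ)*Real.pi/k)^2 + h^2 := by
      nlinarith [mul_nonneg (sq_nonneg h)
        (sub_nonneg.mpr (Real.sin_sq_le_one ((j:ℝ)*Real.pi/k)))]
    have := Real.rpow_le_rpow_of_nonpos (by positivity) h1 (by linarith : -α/2 ≤ 0)
    refine this.trans_eq ?_
    rw [← Real.rpow_natCast ((j:ℝ)/k) 2, ← Real.rpow_mul hjk0.le,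
      show ((2:ℕ):ℝ) * (-α/2) = -α by push_cast; ring,
      Real.div_rpow (by positivity) hk0.le, Real.rpow_neg hk0.le α, div_eq_mul_inv, inv_inv, mul_comm]
  -- split the sum
  set f : ℕ → ℝ := fun j => ((1-h^2) * Real.sin ((j:ℝ)*Real.pi/k)^2 + h^2) ^ (-α/2) with hf
  have hsplit : ∑ j ∈ Finset.Icc 1 M, f j
      = ∑ j ∈ (Finset.Icc 1 M).filter (fun j => j ≤ m), f j
        + ∑ j ∈ (Finset.Icc 1 M).filter (fun j => ¬ j ≤ m), f j :=
    (Finset.sum_filter_add_sum_filter_not _ _ _).symm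
  have hA : ∑ j ∈ (Finset.Icc 1 M).filter (fun j => j ≤ m), f j ≤ (m:ℝ) * h ^ (-α) := by
    calc ∑ j ∈ (Finset.Icc 1 M).filter (fun j => j ≤ m), f j
        ≤ ∑ _j ∈ (Finset.Icc 1 M).filter (fun j => j ≤ m), h ^ (-α) :=
          Finset.sum_le_sum (fun j hj => hterm1 j (Finset.mem_filter.mp hj).1)
      _ = ((Finset.Icc 1 M).filter (fun j => j ≤ m)).card * h ^ (-α) := by
          rw [Finset.sum_const, nsmul_eq_mul]
      _ ≤ (m:ℝ) * h ^ (-α) := by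
          apply mul_le_mul_of_nonneg_right ?_ (Real.rpow_nonneg hh0.le _)
          have hsub : (Finset.Icc 1 M).filter (fun j => j ≤ m) ⊆ Finset.Icc 1 m := by
            intro j hj
            obtain ⟨hj1, hj2⟩ := Finset.mem_filter.mp hj
            exact Finset.mem_Icc.mpr ⟨(Finset.mem_Icc.mp hj1).1, hj2⟩
          have := Finset.card_le_card hsub
          rw [Nat.card_Icc] at this
          exact_mod_cast this.trans (by omega)
  have hB : ∑ j ∈ (Finset.Icc 1 M).filter (fun j => ¬ j ≤ m), f j
      ≤ (k:ℝ)^α * ((m:ℝ) ^ (1-α) / (α-1)) := by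
    calc ∑ j ∈ (Finset.Icc 1 M).filter (fun j => ¬ j ≤ m), f j
        ≤ ∑ j ∈ (Finset.Icc 1 M).filter (fun j => ¬ j ≤ m), (k:ℝ)^α * (j:ℝ) ^ (-α) :=
          Finset.sum_le_sum (fun j hj => hterm2 j (Finset.mem_filter.mp hj).1)
      _ ≤ ∑ j ∈ Finset.Icc (m+1) M, (k:ℝ)^α * (j:ℝ) ^ (-α) := by
          apply Finset.sum_le_sum_of_subset_of_nonneg
          · intro j hj
            obtain ⟨hj1, hj2⟩ := Finset.mem_filter.mp hj
            obtain ⟨hja, hjb⟩ := Finset.mem_Icc.mp hj1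
            exact Finset.mem_Icc.mpr ⟨by omega, hjb⟩
          · intro j _ _
            have : (0:ℝ) < (j:ℝ) ^ (-α) ∨ j = 0 := by
              rcases Nat.eq_zero_or_pos j with h0 | h0
              · exact Or.inr h0
              · exact Or.inl (Real.rpow_pos_of_pos (by exact_mod_cast h0) _)
            rcases this with h0 | h0
            · positivity
            · subst h0; positivity
      _ = (k:ℝ)^α * ∑ j ∈ Finset.Icc (m+1) M, (j:ℝ) ^ (-α) := by
          rw [Finset.mul_sum]
      _ ≤ (k:ℝ)^α * ((m:ℝ) ^ (1-α) / (α-1)) := by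
          apply mul_le_mul_of_nonneg_left (tail_bound α hα m hm1 M)
            (Real.rpow_nonneg hk0.le _)
  -- arithmetic
  have hh1α : (0:ℝ) < h ^ (1-α) := Real.rpow_pos_of_pos hh0 _
  have hAe : (m:ℝ) * h ^ (-α) ≤ 2 * (k:ℝ) * h ^ (1-α) := by
    have : h * h ^ (-α) = h ^ (1-α) := by
      rw [show (1-α:ℝ) = 1 + (-α) by ring, Real.rpow_add hh0, Real.rpow_one]
    calc (m:ℝ) * h ^ (-α) ≤ 2 * (h * k) * h ^ (-α) :=
          mul_le_mul_of_nonneg_right hm2 (Real.rpow_nonneg hh0.le _)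
      _ = 2 * (k:ℝ) * (h * h ^ (-α)) := by ring
      _ = 2 * (k:ℝ) * h ^ (1-α) := by rw [this]
  have hBe : (k:ℝ)^α * ((m:ℝ) ^ (1-α) / (α-1)) ≤ (k:ℝ) * h ^ (1-α) / (α-1) := by
    have hmhk : (m:ℝ) ^ (1-α) ≤ (h*k) ^ (1-α) :=
      Real.rpow_le_rpow_of_nonpos (by nlinarith) hmle (by linarith)
    have hhk' : (h*(k:ℝ)) ^ (1-α) = h ^ (1-α) * (k:ℝ) ^ (1-α) :=
      Real.mul_rpow hh0.le hk0.le
    have hka : (k:ℝ)^α * (k:ℝ)^(1-α) = (k:ℝ) := by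
      rw [← Real.rpow_add hk0]
      norm_num
    calc (k:ℝ)^α * ((m:ℝ) ^ (1-α) / (α-1))
        ≤ (k:ℝ)^α * ((h*k) ^ (1-α) / (α-1)) := by
          apply mul_le_mul_of_nonneg_left ?_ (Real.rpow_nonneg hk0.le _)
          exact div_le_div_of_nonneg_right hmhk hα1.le
      _ = (k:ℝ)^α * (k:ℝ)^(1-α) * h ^ (1-α) / (α-1) := by rw [hhk']; ring
      _ = (k:ℝ) * h ^ (1-α) / (α-1) := by rw [hka]
  have hRHS : (k:ℝ) / h ^ (α-1) = (k:ℝ) * h ^ (1-α) := by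
    rw [div_eq_mul_inv, ← Real.rpow_neg hh0.le]
    norm_num
  calc ∑ j ∈ Finset.Icc 1 M, f j
      ≤ (m:ℝ) * h ^ (-α) + (k:ℝ)^α * ((m:ℝ) ^ (1-α) / (α-1)) := by
        rw [hsplit]; exact add_le_add hA hB
    _ ≤ 2 * (k:ℝ) * h ^ (1-α) + (k:ℝ) * h ^ (1-α) / (α-1) := add_le_add hAe hBe
    _ = (2 + 1/(α-1)) * ((k:ℝ) * h ^ (1-α)) := by field_simp
    _ ≤ (2 + 1/(α-1)) * ((k:ℝ) / h ^ (α-1) + (k:ℝ)) := by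
        rw [hRHS]
        have : (0:ℝ) < 2 + 1/(α-1) := by positivity
        nlinarith
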